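/- Let S ⊆ {0,1}^X, x ∈ X, and let D_x(S) be the down-shift of S on x (for each x-edge {u₀,u₁} with u₀ ≤ u₁: if exactly one of u₀,u₁ is in S, put the lower vertex u₀ in D_x(S) and remove u₁; otherwise keep membership unchanged). If S is shattering-extremal, then D_x(S) is shattering-extremal. -/
import Mathlib


open Finset

variable {α : Type*} [Fintype α] [DecidableEq α]

/-- `S` shatters `Y`: every assignment on `Y` extends to a member of `S`. -/
def shatters (S : Finset (α → Bool)) (Y : Finset α) : Prop :=
  ∀ f : α → Bool, ∃ s ∈ S, ∀ a ∈ Y, s a = f a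

/-- `S` strongly shatters `Y`: some assignment off `Y` has all its `Y`-extensions in `S`. -/
def stronglyShatters (S : Finset (α → Bool)) (Y : Finset α) : Prop :=
  ∃ g : α → Bool, ∀ f : α → Bool, (fun a => if a ∈ Y then f a else g a) ∈ S

open Classical in
/-- The family of shattered subsets. -/
noncomputable def strF (S : Finset (α → Bool)) : Finset (Finset α) :=
  Finset.univ.filter (fun Y => shatters S Y)

open Classical in
/-- The family of strongly shattered subsets. -/
noncomputable def sstrF (S : Finset (α → Bool)) : Finset (Finset α) :=
  Finset.univ.filter (fun Y => stronglyShatters S Y)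

/-- Shattering-extremal: shattered = strongly shattered. -/
def SE (S : Finset (α → Bool)) : Prop :=
  ∀ Y : Finset α, shatters S Y ↔ stronglyShatters S Y

/-- Down-shift of `S` on coordinate `x`: sort every `x`-edge. -/
def downShift (S : Finset (α → Bool)) (x : α) : Finset (α → Bool) :=
  Finset.univ.filter (fun f =>
    if f x = true then f ∈ S ∧ Function.update f x false ∈ S
    else f ∈ S ∨ Function.update f x true ∈ S)

lemma mem_downShift {S : Finset (α → Bool)} {x : α} {f : α → Bool} :
    f ∈ downShift S x ↔
      (if f x = true then f ∈ S ∧ Function.update f x false ∈ S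
       else f ∈ S ∨ Function.update f x true ∈ S) := by
  simp [downShift]

lemma sstr_sub_str {S : Finset (α → Bool)} {Y : Finset α}
    (h : stronglyShatters S Y) : shatters S Y := by
  obtain ⟨g, hg⟩ := h
  intro f
  exact ⟨_, hg f, fun a ha => by simp [ha]⟩

lemma shatters_of_downShift {S : Finset (α → Bool)} {x : α} {Y : Finset α}
    (h : shatters (downShift S x) Y) : shatters S Y := by
  intro f
  by_cases hx : x ∈ Y
  · obtain ⟨s, hs, hsf⟩ := h (Function.update f x true)
    have hsx : s x = true := by simpa using hsf x hx
    rw [mem_downShift, if_pos hsx] at hs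
    by_cases hfx : f x = true
    · refine ⟨s, hs.1, fun a ha => ?_⟩
      rcases eq_or_ne a x with rfl | hax
      · rw [hsx, hfx]
      · simpa [Function.update_of_ne hax] using hsf a ha
    · refine ⟨Function.update s x false, hs.2, fun a ha => ?_⟩
      rcases eq_or_ne a x with rfl | hax
      · simp [Bool.not_eq_true] at hfx
        simp [hfx]
      · rw [Function.update_of_ne hax]
        simpa [Function.update_of_ne hax] using hsf a ha
  · obtain ⟨s, hs, hsf⟩ := h f
    rw [mem_downShift] at hs
    by_cases hsx : s x = true
    · rw [if_pos hsx] at hs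
      exact ⟨s, hs.1, hsf⟩
    · rw [if_neg hsx] at hs
      rcases hs with hs | hs
      · exact ⟨s, hs, hsf⟩
      · refine ⟨_, hs, fun a ha => ?_⟩
        have hax : a ≠ x := fun hh => hx (hh ▸ ha)
        rw [Function.update_of_ne hax]
        exact hsf a ha

lemma sstr_downShift {S : Finset (α → Bool)} {x : α} {Y : Finset α}
    (h : stronglyShatters S Y) : stronglyShatters (downShift S x) Y := by
  obtain ⟨g, hg⟩ := h
  refine ⟨Function.update g x false, fun f => ?_⟩
  set F : α → Bool := fun a => if a ∈ Y then f a else Function.update g x false a with hF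
  rw [mem_downShift]
  by_cases hx : x ∈ Y
  · have hFg : F = (fun a => if a ∈ Y then f a else g a) := by
      funext a
      by_cases ha : a ∈ Y
      · simp [hF, ha]
      · have hax : a ≠ x := fun hh => ha (hh ▸ hx)
        simp [hF, ha, Function.update_of_ne hax]
    split_ifs with hFx
    · refine ⟨by rw [hFg]; exact hg f, ?_⟩
      have hupd : Function.update F x false =
          (fun a => if a ∈ Y then (Function.update f x false) a else g a) := by
        funext a
        rcases eq_or_ne a x with rfl | hax
        · simp [hx]
        · rw [Function.update_of_ne hax, hFg, Function.update_of_ne hax]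
      rw [hupd]; exact hg _
    · left; rw [hFg]; exact hg f
  · have hFx : F x = false := by simp [hF, hx]
    rw [if_neg (by simp [hFx])]
    by_cases hgx : g x = true
    · right
      have hupd : Function.update F x true = (fun a => if a ∈ Y then f a else g a) := by
        funext a
        rcases eq_or_ne a x with rfl | hax
        · simp [hx, hgx]
        · rw [Function.update_of_ne hax]
          simp [hF, Function.update_of_ne hax]
      rw [hupd]; exact hg f
    · left
      have hFg : F = (fun a => if a ∈ Y then f a else g a) := by
        funext a
        rcases eq_or_ne a x with rfl | hax
        · have hg0 : g a = false := by simpa using hgx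
          simp [hF, hx, hg0]
        · simp [hF, Function.update_of_ne hax]
      rw [hFg]; exact hg f

theorem stmt17 (S : Finset (α → Bool)) (x : α) (h : SE S) : SE (downShift S x) := by
  intro Y
  constructor
  · intro hsh
    exact sstr_downShift ((h Y).mp (shatters_of_downShift hsh))
  · exact sstr_sub_str
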